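/- (Theorem 5: optimal contest with group-specific prizes only.) Let n ≥ 2, μ ∈ (0,1], let F : [0,1] → [0,1] be continuously differentiable, strictly increasing, with F(0) = 0, F(1) = 1, and derivative f. Set H(y) = (1−μ) + μF(y) and f^H_{n−1,j}(y) = ((n−1)!/((j−1)!(n−1−j)!)) H(y)^{n−1−j} (1−H(y))^{j−1} μ f(y). For a prize vector ω = (ω_1, …, ω_n) with ω_1 ≥ … ≥ ω_n ≥ 0 and Σ_j ω_j ≤ 1, define the equilibrium target-group strategy α_ω(v) = Σ_{j=1}^{n−1} (ω_j − ω_{j+1}) ∫_0^v y f^H_{n−1,j}(y) dy and the designer objective J(ω) = ∫_0^1 α_ω(v) f(v) dv. Then the prize vector ω* = (1, 0, …, 0) satisfies J(ω*) ≥ J(ω) for every feasible prize vector ω. -/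

import Mathlib

open scoped Nat

/-- Density of the `j`-th highest order statistic out of `m` i.i.d. samples from `H`. -/
noncomputable def orderDensity (H h : ℝ → ℝ) (m j : ℕ) (y : ℝ) : ℝ :=
  ((m ! : ℝ) / (((j-1)! : ℝ) * ((m-j)! : ℝ))) * (H y)^(m-j) * (1 - H y)^(j-1) * h y

/-- Equilibrium strategy `α_ω(v) = Σ_{j=1}^{n−1} (ω_j − ω_{j+1}) ∫_0^v y f^H_{n−1,j}(y) dy`. -/
noncomputable def eqStrategy (H h : ℝ → ℝ) (n : ℕ) (ω : ℕ → ℝ) (v : ℝ) : ℝ :=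
  ∑ j ∈ Finset.Icc 1 (n-1), (ω j - ω (j+1)) * ∫ y in (0:ℝ)..v, y * orderDensity H h (n-1) j y

/-- Designer objective: expected equilibrium output of a target-group agent,
`J(ω) = ∫_0^1 α_ω(v) f(v) dv`. -/
noncomputable def designerObj (H h f : ℝ → ℝ) (n : ℕ) (ω : ℕ → ℝ) : ℝ :=
  ∫ v in (0:ℝ)..1, eqStrategy H h n ω v * f v

open Set MeasureTheory intervalIntegral Filter Topology


/-- Bernstein-type monomial. -/
noncomputable def bern (m i : ℕ) (t : ℝ) : ℝ :=
  (m.choose i : ℝ) * t ^ i * (1 - t) ^ (m - i)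

lemma bern_continuous (m i : ℕ) : Continuous (bern m i) := by
  unfold bern
  exact (continuous_const.mul (continuous_pow i)).mul
    ((continuous_const.sub continuous_id).pow (m - i))

lemma bern_nonneg (m i : ℕ) {t : ℝ} (ht : t ∈ Icc (0:ℝ) 1) : 0 ≤ bern m i t := by
  have h1 := ht.1; have h2 := ht.2
  exact mul_nonneg (mul_nonneg (by positivity) (pow_nonneg h1 _))
    (pow_nonneg (by linarith) _)

lemma bern_hasDerivAt (m i : ℕ) (h1 : 1 ≤ i) (h2 : i ≤ m) (t : ℝ) :
    HasDerivAt (bern (m+1) i)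
      ((m+1 : ℝ) * (bern m (i-1) t - bern m i t)) t := by
  obtain ⟨k, rfl⟩ : ∃ k, i = k + 1 := ⟨i - 1, by omega⟩
  have d1 : HasDerivAt (fun s : ℝ => s ^ (k+1)) (((k+1):ℕ) * t ^ k) t := by
    simpa using hasDerivAt_pow (k+1) t
  have d0 : HasDerivAt (fun s : ℝ => 1 - s) (-1) t := by
    simpa using (hasDerivAt_id t).const_sub 1
  have d2 : HasDerivAt (fun s : ℝ => (1 - s) ^ (m+1-(k+1)))
      (((m+1-(k+1) : ℕ) : ℝ) * (1 - t) ^ (m - (k+1)) * (-1)) t := by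
    have := d0.pow (m+1-(k+1))
    have he : m + 1 - (k+1) - 1 = m - (k+1) := by omega
    rwa [he] at this
  have dm : HasDerivAt (fun s : ℝ => ((m+1).choose (k+1) : ℝ) * s ^ (k+1))
      (((m+1).choose (k+1) : ℝ) * ((((k+1):ℕ)) * t ^ k)) t := d1.const_mul _
  have dprod := dm.mul d2
  have hfun : ((fun s : ℝ => ((m+1).choose (k+1) : ℝ) * s ^ (k+1)) * fun s => (1 - s) ^ (m+1-(k+1)))
      = bern (m+1) (k+1) := by
    funext s; unfold bern; simp only [Pi.mul_apply]
  rw [hfun] at dprod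
  have e1 : m + 1 - (k+1) = m - k := by omega
  have e2 : k + 1 - 1 = k := by omega
  rw [e1] at dprod
  refine dprod.congr_deriv (Eq.symm ?_)
  have idA : ((m+1).choose (k+1) : ℝ) * ((k+1 : ℕ) : ℝ) = ((m+1) : ℝ) * (m.choose k : ℝ) := by
    exact_mod_cast congrArg (Nat.cast (R := ℝ)) (Nat.add_one_mul_choose_eq m k).symm
  have idB : ((m.choose (k+1)) : ℝ) * ((m+1) : ℝ)
      = ((m+1).choose (k+1) : ℝ) * ((m - k : ℕ) : ℝ) := by
    have := congrArg (Nat.cast (R := ℝ)) (Nat.choose_mul_succ_eq m (k+1))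
    rw [e1] at this
    exact_mod_cast this
  unfold bern
  rw [e2]
  push_cast at idA idB ⊢
  linear_combination (-(t^k * (1-t)^(m-k))) * idA - (t^(k+1) * (1-t)^(m-(k+1))) * idB

lemma tele_hasDerivAt (m j : ℕ) (h1 : 1 ≤ j) (h2 : j ≤ m) (t : ℝ) :
    HasDerivAt (fun s => ∑ l ∈ Finset.range (j-1), bern (m+1) (m-j+1+l) s)
      ((m+1 : ℝ) * (bern m (m-j) t - bern m (m-1) t)) t := by
  have Hd := HasDerivAt.fun_sum (A := fun l (s : ℝ) => bern (m+1) (m-j+1+l) s)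
    (A' := fun l => (m+1 : ℝ) * (bern m (m-j+1+l-1) t - bern m (m-j+1+l) t))
    (fun l (hl : l ∈ Finset.range (j-1)) => bern_hasDerivAt m (m-j+1+l) (by omega)
      (by have := Finset.mem_range.mp hl; omega) t)
  refine Hd.congr_deriv ?_
  have hc : ∀ l ∈ Finset.range (j-1),
      (m+1 : ℝ) * (bern m (m-j+1+l-1) t - bern m (m-j+1+l) t)
      = (fun l => (m+1 : ℝ) * bern m (m-j+l) t) l
        - (fun l => (m+1 : ℝ) * bern m (m-j+l) t) (l+1) := by
    intro l hl
    have e1 : m-j+1+l-1 = m-j+l := by omega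
    have e2 : m-j+1+l = m-j+(l+1) := by omega
    rw [e1, e2]; ring
  rw [Finset.sum_congr rfl hc, Finset.sum_range_sub']
  have e3 : m - j + (j-1) = m - 1 := by omega
  rw [e3]; simp; ring

/-- The antiderivative `Q`. -/
noncomputable def Qfun (m j : ℕ) (t : ℝ) : ℝ :=
  -((j:ℝ)/(m+1)) * ∑ l ∈ Finset.range (j-1), bern (m+1) (m-j+1+l) t

lemma Qfun_continuous (m j : ℕ) : Continuous (Qfun m j) := by
  unfold Qfun
  exact continuous_const.mul (continuous_finset_sum _ fun l _ => bern_continuous _ _)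

lemma Qfun_hasDerivAt (m j : ℕ) (h1 : 1 ≤ j) (h2 : j ≤ m) (t : ℝ) :
    HasDerivAt (Qfun m j) ((j:ℝ) * (bern m (m-1) t - bern m (m-j) t)) t := by
  have := (tele_hasDerivAt m j h1 h2 t).const_mul (-((j:ℝ)/(m+1)))
  refine this.congr_deriv ?_
  have hm : ((m:ℝ)+1) ≠ 0 := by positivity
  field_simp
  ring

lemma Qfun_nonpos (m j : ℕ) {t : ℝ} (ht : t ∈ Icc (0:ℝ) 1) : Qfun m j t ≤ 0 := by
  unfold Qfun
  have hs : 0 ≤ ∑ l ∈ Finset.range (j-1), bern (m+1) (m-j+1+l) t :=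
    Finset.sum_nonneg fun l _ => bern_nonneg _ _ ht
  have : (0:ℝ) ≤ (j:ℝ)/(m+1) := by positivity
  exact mul_nonpos_of_nonpos_of_nonneg (by linarith) hs

lemma Qfun_one (m j : ℕ) (h2 : j ≤ m) : Qfun m j 1 = 0 := by
  unfold Qfun
  rw [Finset.sum_eq_zero, mul_zero]
  intro l hl
  have := Finset.mem_range.mp hl
  unfold bern
  have : m + 1 - (m-j+1+l) ≠ 0 := by omega
  simp [zero_pow this]

lemma abel_sum (ω : ℕ → ℝ) (m : ℕ) :
    ∑ j ∈ Finset.Icc 1 m, (j:ℝ) * (ω j - ω (j+1))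
      = (∑ j ∈ Finset.Icc 1 m, ω j) - m * ω (m+1) := by
  induction m with
  | zero => simp
  | succ p ih =>
      rw [Finset.sum_Icc_succ_top (by omega), Finset.sum_Icc_succ_top (by omega), ih]
      push_cast; ring

lemma deriv_nonneg_of_monotoneOn {F f : ℝ → ℝ} (hmono : MonotoneOn F (Icc 0 1))
    (hderiv : ∀ v ∈ Icc (0:ℝ) 1, HasDerivWithinAt F (f v) (Icc 0 1) v) :
    ∀ v ∈ Icc (0:ℝ) 1, 0 ≤ f v := by
  intro v hv
  have ht := hasDerivWithinAt_iff_tendsto_slope.mp (hderiv v hv)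
  rcases lt_or_eq_of_le hv.2 with h1 | h1
  · have hsub : Ioc v 1 ⊆ Icc (0:ℝ) 1 \ {v} := by
      intro u hu
      exact ⟨⟨le_trans hv.1 hu.1.le, hu.2⟩, by simp [ne_of_gt hu.1]⟩
    have htt : Tendsto (slope F v) (𝓝[Ioc v 1] v) (𝓝 (f v)) :=
      ht.mono_left (nhdsWithin_mono v hsub)
    rw [nhdsWithin_Ioc_eq_nhdsGT h1] at htt
    refine ge_of_tendsto htt ?_
    filter_upwards [Ioc_mem_nhdsGT_of_mem (Set.left_mem_Ico.mpr h1)] with u hu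
    rw [slope_def_field]
    have : F v ≤ F u := hmono hv ⟨le_trans hv.1 hu.1.le, hu.2⟩ hu.1.le
    have huv : 0 < u - v := by linarith [hu.1]
    exact div_nonneg (by linarith) huv.le
  · subst h1
    have hsub : Ico (0:ℝ) 1 ⊆ Icc (0:ℝ) 1 \ {1} := by
      intro u hu
      exact ⟨⟨hu.1, hu.2.le⟩, by simp [ne_of_lt hu.2]⟩
    have htt : Tendsto (slope F 1) (𝓝[Ico (0:ℝ) 1] 1) (𝓝 (f 1)) :=
      ht.mono_left (nhdsWithin_mono 1 hsub)
    rw [nhdsWithin_Ico_eq_nhdsLT zero_lt_one] at htt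
    refine ge_of_tendsto htt ?_
    filter_upwards [Ico_mem_nhdsLT_of_mem (Set.right_mem_Ioc.mpr zero_lt_one)] with u hu
    rw [slope_def_field]
    have : F u ≤ F 1 := hmono ⟨hu.1, hu.2.le⟩ (by simp) hu.2.le
    have huv : u - 1 < 0 := by linarith [hu.2]
    exact div_nonneg_of_nonpos (by linarith) huv.le


/-- Theorem 5: in a contest with target group-specific prizes only, with
effective competitor ability distribution `H(y) = (1−μ) + μF(y)`, the prize vector `(1,0,…,0)`
maximizes the expected target-group output over all feasible prize vectors
`ω_1 ≥ … ≥ ω_n ≥ 0` with `Σ_j ω_j ≤ 1`. -/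
theorem optimal_group_specific_contest (n : ℕ) (hn : 2 ≤ n)
    (μ : ℝ) (hμ : μ ∈ Set.Ioc (0:ℝ) 1) (F f : ℝ → ℝ)
    (hmono : StrictMonoOn F (Set.Icc (0:ℝ) 1))
    (hF0 : F 0 = 0) (hF1 : F 1 = 1)
    (hderiv : ∀ v ∈ Set.Icc (0:ℝ) 1, HasDerivWithinAt F (f v) (Set.Icc (0:ℝ) 1) v)
    (hcont : ContinuousOn f (Set.Icc (0:ℝ) 1)) :
    ∀ ω : ℕ → ℝ,
      (∀ j, 1 ≤ j → j < n → ω (j+1) ≤ ω j) → 0 ≤ ω n →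
      (∑ j ∈ Finset.Icc 1 n, ω j) ≤ 1 →
      designerObj (fun y => (1-μ) + μ * F y) (fun y => μ * f y) f n ω
        ≤ designerObj (fun y => (1-μ) + μ * F y) (fun y => μ * f y) f n
            (fun j => if j = 1 then 1 else 0) := by
  obtain ⟨hμ0, hμ1⟩ := hμ
  intro ω hωmono hωn hsum
  set m := n - 1 with hmdef
  have hm1 : 1 ≤ m := by omega
  have hmn : m + 1 = n := by omega
  set Hf : ℝ → ℝ := fun y => (1-μ) + μ * F y with hHf
  set hf : ℝ → ℝ := fun y => μ * f y with hhf
  have hFcont : ContinuousOn F (Icc (0:ℝ) 1) := fun x hx => (hderiv x hx).continuousWithinAt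
  have hFmono : MonotoneOn F (Icc (0:ℝ) 1) := hmono.monotoneOn
  have hF01 : ∀ y ∈ Icc (0:ℝ) 1, 0 ≤ F y ∧ F y ≤ 1 := by
    intro y hy
    have ha := hFmono (Set.left_mem_Icc.mpr zero_le_one) hy hy.1
    have hb := hFmono hy (Set.right_mem_Icc.mpr zero_le_one) hy.2
    rw [hF0] at ha; rw [hF1] at hb; exact ⟨ha, hb⟩
  have hfnn : ∀ v ∈ Icc (0:ℝ) 1, 0 ≤ f v := deriv_nonneg_of_monotoneOn hFmono hderiv
  have hhfnn : ∀ v ∈ Icc (0:ℝ) 1, 0 ≤ hf v := fun v hv => mul_nonneg hμ0.le (hfnn v hv)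
  have hHcont : ContinuousOn Hf (Icc (0:ℝ) 1) :=
    continuousOn_const.add (continuousOn_const.mul hFcont)
  have hH01 : ∀ y ∈ Icc (0:ℝ) 1, 0 ≤ Hf y ∧ Hf y ≤ 1 := by
    intro y hy
    obtain ⟨ha, hb⟩ := hF01 y hy
    constructor
    · simp only [hHf]; nlinarith
    · simp only [hHf]; nlinarith
  have hH1 : Hf 1 = 1 := by simp [hHf, hF1]
  have hHderiv : ∀ x ∈ Ioo (0:ℝ) 1, HasDerivAt Hf (hf x) x := by
    intro x hx
    have h0 := (hderiv x (Ioo_subset_Icc_self hx)).hasDerivAt (Icc_mem_nhds hx.1 hx.2)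
    simpa [hHf, hhf] using (h0.const_mul μ).const_add (1-μ)
  have hcont_hf : ContinuousOn hf (Icc (0:ℝ) 1) := continuousOn_const.mul hcont
  set g : ℕ → ℝ → ℝ := fun j y => y * orderDensity Hf hf m j y with hgdef
  have hodcont : ∀ j, ContinuousOn (fun y => orderDensity Hf hf m j y) (Icc (0:ℝ) 1) := by
    intro j
    unfold orderDensity
    exact ((continuousOn_const.mul (hHcont.pow _)).mul
      ((continuousOn_const.sub hHcont).pow _)).mul hcont_hf
  have hgcont : ∀ j, ContinuousOn (g j) (Icc (0:ℝ) 1) :=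
    fun j => ContinuousOn.mul continuousOn_id (hodcont j)
  have hodnn : ∀ j, ∀ y ∈ Icc (0:ℝ) 1, 0 ≤ orderDensity Hf hf m j y := by
    intro j y hy
    obtain ⟨ha, hb⟩ := hH01 y hy
    unfold orderDensity
    refine mul_nonneg (mul_nonneg (mul_nonneg (by positivity) (pow_nonneg ha _))
      (pow_nonneg (by linarith) _)) (hhfnn y hy)
  have hgint : ∀ j, ∀ v ∈ Icc (0:ℝ) 1, IntervalIntegrable (g j) volume 0 v := by
    intro j v hv
    apply ContinuousOn.intervalIntegrable
    apply (hgcont j).mono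
    rw [uIcc_of_le hv.1]
    exact Icc_subset_Icc le_rfl hv.2
  set A : ℕ → ℝ → ℝ := fun j v => ∫ y in (0:ℝ)..v, g j y with hAdef
  have hAcont : ∀ j, ContinuousOn (A j) (Icc (0:ℝ) 1) := by
    intro j
    have h_int : IntegrableOn (g j) (uIcc (0:ℝ) 1) volume := by
      rw [uIcc_of_le zero_le_one]; exact (hgcont j).integrableOn_Icc
    have := intervalIntegral.continuousOn_primitive_interval h_int
    rwa [uIcc_of_le zero_le_one] at this
  have hAderiv : ∀ j, ∀ x ∈ Ioo (0:ℝ) 1, HasDerivAt (A j) (g j x) x := by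
    intro j x hx
    exact intervalIntegral.integral_hasDerivAt_right
      (hgint j x (Ioo_subset_Icc_self hx))
      (ContinuousOn.stronglyMeasurableAtFilter isOpen_Ioo
        ((hgcont j).mono Ioo_subset_Icc_self) x hx)
      ((hgcont j).continuousAt (Icc_mem_nhds hx.1 hx.2))
  set K : ℕ → ℝ := fun j => ∫ v in (0:ℝ)..1, A j v * f v with hKdef
  -- the objective as a sum
  have hobj : ∀ σ : ℕ → ℝ, designerObj Hf hf f n σ
      = ∑ j ∈ Finset.Icc 1 m, (σ j - σ (j+1)) * K j := by
    intro σ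
    unfold designerObj eqStrategy
    rw [← hmdef]
    have hrw : ∀ v : ℝ,
        (∑ j ∈ Finset.Icc 1 m, (σ j - σ (j+1)) * ∫ y in (0:ℝ)..v, y * orderDensity Hf hf m j y)
          * f v = ∑ j ∈ Finset.Icc 1 m, (σ j - σ (j+1)) * (A j v * f v) := by
      intro v
      rw [Finset.sum_mul]
      exact Finset.sum_congr rfl fun j _ => by rw [mul_assoc]
    simp only [hrw]
    rw [intervalIntegral.integral_finset_sum]
    · exact Finset.sum_congr rfl fun j _ => by
        rw [intervalIntegral.integral_const_mul]
    · intro j _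
      apply ContinuousOn.intervalIntegrable
      rw [uIcc_of_le zero_le_one]
      exact continuousOn_const.mul ((hAcont j).mul hcont)
  -- integration by parts: K j = ∫ g j (1 - F)
  have huIcc : Set.uIcc (0:ℝ) 1 = Icc (0:ℝ) 1 := uIcc_of_le zero_le_one
  have hfint : IntervalIntegrable f volume 0 1 := by
    apply ContinuousOn.intervalIntegrable; rwa [huIcc]
  have hgFint : ∀ i, IntervalIntegrable (fun y => g i y * (1 - F y)) volume 0 1 := by
    intro i
    apply ContinuousOn.intervalIntegrable
    rw [huIcc]
    exact (hgcont i).mul (continuousOn_const.sub hFcont)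
  have hKrep : ∀ j, K j = ∫ y in (0:ℝ)..1, g j y * (1 - F y) := by
    intro j
    have hP1 := intervalIntegral.integral_mul_deriv_eq_deriv_mul_of_hasDeriv_right
      (u := A j) (v := F) (u' := g j) (v' := f) (a := 0) (b := 1)
      (by rw [huIcc]; exact hAcont j)
      (by rw [huIcc]; exact hFcont)
      (by intro x hx
          rw [min_eq_left zero_le_one, max_eq_right zero_le_one] at hx
          exact (hAderiv j x hx).hasDerivWithinAt)
      (by intro x hx
          rw [min_eq_left zero_le_one, max_eq_right zero_le_one] at hx
          exact ((hderiv x (Ioo_subset_Icc_self hx)).hasDerivAt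
            (Icc_mem_nhds hx.1 hx.2)).hasDerivWithinAt)
      (hgint j 1 (Set.right_mem_Icc.mpr zero_le_one))
      hfint
    have hA0 : A j 0 = 0 := intervalIntegral.integral_same
    have hgFint2 : IntervalIntegrable (fun y => g j y * F y) volume 0 1 := by
      apply ContinuousOn.intervalIntegrable
      rw [huIcc]
      exact (hgcont j).mul hFcont
    rw [hKdef]
    simp only []
    rw [hP1, hA0, hF0, hF1, mul_one, mul_zero, sub_zero]
    have hA1 : A j 1 = ∫ y in (0:ℝ)..1, g j y := rfl
    rw [hA1, ← intervalIntegral.integral_sub (hgint j 1 (Set.right_mem_Icc.mpr zero_le_one))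
      hgFint2]
    congr 1
    funext y
    ring
  have hK1nn : 0 ≤ K 1 := by
    rw [hKrep 1]
    apply intervalIntegral.integral_nonneg zero_le_one
    intro u hu
    have h2 := (hF01 u hu).2
    exact mul_nonneg (mul_nonneg hu.1 (hodnn 1 u hu)) (by linarith)
  -- key inequality K j ≤ j * K 1
  have hkey : ∀ j ∈ Finset.Icc 1 m, K j ≤ (j:ℝ) * K 1 := by
    intro j hj
    obtain ⟨h1j, hjm⟩ := Finset.mem_Icc.mp hj
    obtain ⟨k, rfl⟩ : ∃ k, j = k + 1 := ⟨j - 1, by omega⟩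
    -- the coefficient of the order density as j * choose
    have hfac0 : ((k:ℕ)! : ℝ) ≠ 0 := by exact_mod_cast (Nat.factorial_pos k).ne'
    have hfac1 : (((m - (k+1)):ℕ)! : ℝ) ≠ 0 := by
      exact_mod_cast (Nat.factorial_pos (m - (k+1))).ne'
    have hbj : ((m ! : ℝ) / (((k+1-1)! : ℝ) * ((m-(k+1))! : ℝ)))
        = ((k+1 : ℕ):ℝ) * (m.choose (k+1) : ℝ) := by
      have hfact : m ! = m.choose (k+1) * (k+1)! * (m-(k+1))! :=
        (Nat.choose_mul_factorial_mul_factorial hjm).symm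
      have e4 : k + 1 - 1 = k := by omega
      rw [e4, hfact, Nat.factorial_succ]
      push_cast
      field_simp
    have hc1 : ((m ! : ℝ) / (((1-1)! : ℝ) * ((m-1)! : ℝ))) = (m : ℝ) := by
      have hm' : m - 1 + 1 = m := by omega
      have hfact : m ! = m * (m-1)! := by
        conv_lhs => rw [← hm']
        rw [Nat.factorial_succ, hm']
      have e3 : (1:ℕ) - 1 = 0 := rfl
      rw [e3, hfact, Nat.factorial_zero]
      push_cast
      have : (((m-1):ℕ)! : ℝ) ≠ 0 := by exact_mod_cast (Nat.factorial_pos (m-1)).ne'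
      field_simp
    have hcm1 : (m.choose (m-1) : ℝ) = (m : ℝ) := by
      have : m.choose (m-1) = m := by
        rw [Nat.choose_symm hm1, Nat.choose_one_right]
      exact_mod_cast this
    have hcmj : (m.choose (m-(k+1)) : ℝ) = (m.choose (k+1) : ℝ) := by
      exact_mod_cast congrArg (Nat.cast (R := ℝ)) (Nat.choose_symm hjm)
    -- pointwise identity
    have hident : ∀ y : ℝ, ((k+1:ℕ):ℝ) * (g 1 y * (1 - F y)) - g (k+1) y * (1 - F y)
        = (1/μ) * (y * ((((k+1:ℕ):ℝ) * (bern m (m-1) (Hf y) - bern m (m-(k+1)) (Hf y))) * hf y)) := by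
      intro y
      have hsubH : 1 - Hf y = μ * (1 - F y) := by simp only [hHf]; ring
      have e1 : m - (m-1) = 1 := by omega
      have e2 : m - (m-(k+1)) = k+1 := by omega
      simp only [hgdef]
      unfold orderDensity bern
      rw [e1, e2, hbj, hc1, hcm1, hcmj]
      have e3 : (1:ℕ) - 1 = 0 := rfl
      rw [e3, pow_zero, pow_one]
      have e4 : k + 1 - 1 = k := by omega
      rw [e4, pow_succ]
      rw [hsubH]
      simp only [hhf]
      field_simp
    -- second integration by parts
    have hQ1 : Qfun m (k+1) (Hf 1) = 0 := by rw [hH1]; exact Qfun_one m (k+1) hjm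
    have hDQcont : ContinuousOn
        (fun y => (((k+1:ℕ):ℝ) * (bern m (m-1) (Hf y) - bern m (m-(k+1)) (Hf y))) * hf y)
        (Icc (0:ℝ) 1) :=
      (continuousOn_const.mul (((bern_continuous m (m-1)).comp_continuousOn hHcont).sub
        ((bern_continuous m (m-(k+1))).comp_continuousOn hHcont))).mul hcont_hf
    have hP2 := intervalIntegral.integral_mul_deriv_eq_deriv_mul_of_hasDeriv_right
      (u := fun y => y) (v := fun y => Qfun m (k+1) (Hf y)) (u' := fun _ => (1:ℝ))
      (v' := fun y => (((k+1:ℕ):ℝ) * (bern m (m-1) (Hf y) - bern m (m-(k+1)) (Hf y))) * hf y)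
      (a := 0) (b := 1)
      (by rw [huIcc]; exact continuousOn_id)
      (by rw [huIcc]; exact (Qfun_continuous m (k+1)).comp_continuousOn hHcont)
      (fun x _ => (hasDerivAt_id x).hasDerivWithinAt)
      (by intro x hx
          rw [min_eq_left zero_le_one, max_eq_right zero_le_one] at hx
          exact (((Qfun_hasDerivAt m (k+1) (by omega) hjm (Hf x)).comp x
            (hHderiv x hx))).hasDerivWithinAt)
      intervalIntegrable_const
      (by apply ContinuousOn.intervalIntegrable; rw [huIcc]; exact hDQcont)
    have hQint : ∫ y in (0:ℝ)..1, Qfun m (k+1) (Hf y) ≤ 0 := by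
      have h0 : 0 ≤ ∫ y in (0:ℝ)..1, -(Qfun m (k+1) (Hf y)) := by
        apply intervalIntegral.integral_nonneg zero_le_one
        intro u hu
        have := Qfun_nonpos m (k+1) (⟨(hH01 u hu).1, (hH01 u hu).2⟩ : Hf u ∈ Icc (0:ℝ) 1)
        linarith
      rw [intervalIntegral.integral_neg] at h0
      linarith
    -- combine
    have hchain : ((k+1:ℕ):ℝ) * K 1 - K (k+1)
        = (1/μ) * ∫ y in (0:ℝ)..1,
            y * ((((k+1:ℕ):ℝ) * (bern m (m-1) (Hf y) - bern m (m-(k+1)) (Hf y))) * hf y) := by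
      rw [hKrep 1, hKrep (k+1)]
      rw [← intervalIntegral.integral_const_mul]
      rw [← intervalIntegral.integral_sub ((hgFint 1).const_mul (((k+1:ℕ):ℝ))) (hgFint (k+1))]
      rw [show (fun y => ((k+1:ℕ):ℝ) * (g 1 y * (1 - F y)) - g (k+1) y * (1 - F y))
          = (fun y => (1/μ) * (y * ((((k+1:ℕ):ℝ) * (bern m (m-1) (Hf y)
              - bern m (m-(k+1)) (Hf y))) * hf y))) from funext hident]
      rw [intervalIntegral.integral_const_mul]
    have hpos : 0 ≤ ((k+1:ℕ):ℝ) * K 1 - K (k+1) := by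
      rw [hchain, hP2]
      simp only [hQ1, one_mul, zero_mul, mul_zero, zero_sub, sub_zero]
      have hμinv : 0 ≤ 1/μ := by positivity
      apply mul_nonneg hμinv
      linarith
    linarith
  -- assemble
  rw [hobj ω, hobj (fun j => if j = 1 then 1 else 0)]
  have hstar : ∑ j ∈ Finset.Icc 1 m,
      ((if j = 1 then (1:ℝ) else 0) - (if j+1 = 1 then 1 else 0)) * K j = K 1 := by
    rw [Finset.sum_eq_single 1]
    · norm_num
    · intro j hj hne
      have h1j := (Finset.mem_Icc.mp hj).1
      have hne2 : j + 1 ≠ 1 := by omega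
      simp [hne, hne2, show j ≠ 0 by omega]
    · intro h; exact absurd (Finset.mem_Icc.mpr ⟨le_rfl, hm1⟩) h
  rw [hstar]
  have hfinal : ∑ j ∈ Finset.Icc 1 m, (ω j - ω (j+1)) * K j ≤ K 1 := by
    calc ∑ j ∈ Finset.Icc 1 m, (ω j - ω (j+1)) * K j
        ≤ ∑ j ∈ Finset.Icc 1 m, (ω j - ω (j+1)) * ((j:ℝ) * K 1) := by
          apply Finset.sum_le_sum
          intro j hj
          obtain ⟨h1j, hjm2⟩ := Finset.mem_Icc.mp hj
          have hd : 0 ≤ ω j - ω (j+1) := sub_nonneg.mpr (hωmono j h1j (by omega))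
          exact mul_le_mul_of_nonneg_left (hkey j hj) hd
      _ = (∑ j ∈ Finset.Icc 1 m, (j:ℝ) * (ω j - ω (j+1))) * K 1 := by
          rw [Finset.sum_mul]
          exact Finset.sum_congr rfl fun j _ => by ring
      _ ≤ 1 * K 1 := by
          apply mul_le_mul_of_nonneg_right _ hK1nn
          rw [abel_sum]
          have hsplit : ∑ j ∈ Finset.Icc 1 n, ω j = (∑ j ∈ Finset.Icc 1 m, ω j) + ω n := by
            rw [← hmn]
            exact Finset.sum_Icc_succ_top (by omega) _
          have hmω : ω (m+1) = ω n := by rw [hmn]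
          rw [hmω]
          have hmc : (0:ℝ) ≤ (m:ℝ) := Nat.cast_nonneg m
          nlinarith [hsum, hωn, hsplit]
      _ = K 1 := one_mul _
  exact hfinal
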